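/- If there exists an (n,r)-pairs-triples design with 1 ≤ r < n−1, then there exists a mixed Steiner system MS(2,3, Z_2^n × Z_{r+1}). -/

import Mathlib

section Aux

def enc {n : ℕ} (s : Finset (Fin n)) (m : ℕ) : Fin n ⊕ Unit → ℕ :=
  Sum.elim (fun v => if v ∈ s then 1 else 0) (fun _ => m)

lemma dist_enc {n : ℕ} (s t : Finset (Fin n)) (m m' : ℕ) :
    hammingDist (enc s m) (enc t m') =
      ((s \ t).card + (t \ s).card) + (if m = m' then 0 else 1) := by
  have hfil : (Finset.univ.filter fun v : Fin n => enc s m (Sum.inl v) ≠ enc t m' (Sum.inl v))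
      = (s \ t) ∪ (t \ s) := by
    ext v
    rw [Finset.mem_filter]
    by_cases hs : v ∈ s <;> by_cases ht : v ∈ t <;> simp [enc, hs, ht]
  rw [hammingDist]
  rw [Finset.card_filter, Fintype.sum_sum_type]
  rw [← Finset.card_filter, ← Finset.card_filter, hfil,
    Finset.card_union_of_disjoint disjoint_sdiff_sdiff]
  congr 1
  simp [enc]
  by_cases h : m = m' <;> simp [h]

lemma enc_empty_zero {n : ℕ} : (enc (∅ : Finset (Fin n)) 0) = 0 := by
  funext i; cases i <;> simp [enc]

lemma norm_enc {n : ℕ} (s : Finset (Fin n)) (m : ℕ) :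
    hammingNorm (enc s m) = s.card + (if m = 0 then 0 else 1) := by
  rw [← hammingDist_zero_right, ← enc_empty_zero, dist_enc]
  simp

lemma inter_card_le_one {α : Type*} [DecidableEq α] {s t : Finset α}
    (h2 : s.card = 2) (hst : ¬ s ⊆ t) : (s ∩ t).card ≤ 1 := by
  by_contra hc
  push_neg at hc
  have hsub : s ∩ t ⊆ s := Finset.inter_subset_left
  have hcard : s.card ≤ (s ∩ t).card := by
    have := Finset.card_le_card hsub
    omega
  have heq : s ∩ t = s := Finset.eq_of_subset_of_card_le hsub hcard
  exact hst (heq ▸ Finset.inter_subset_right)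

lemma eq_of_sdiff_card {α : Type*} [DecidableEq α] {s t : Finset α}
    (h : (s \ t).card = 0 ∧ (t \ s).card = 0) : s = t := by
  obtain ⟨h1, h2⟩ := h
  rw [Finset.card_eq_zero, Finset.sdiff_eq_empty_iff_subset] at h1 h2
  exact Finset.Subset.antisymm h1 h2

end Aux

/-- A mixed Steiner system MS(t,k,Q) over the mixed alphabet described by `q : ι → ℕ`
(words are functions `x : ι → ℕ` with `x i < q i`): a set `C` of words of Hamming
weight `k` such that every word of Hamming weight `t` is at Hamming distance exactly
`k - t` from exactly one codeword, and distinct codewords are at Hamming distance at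
least `2(k-t)+1`. -/
def IsMixedSteiner {ι : Type*} [Fintype ι] [DecidableEq ι] (q : ι → ℕ) (t k : ℕ)
    (C : Set (ι → ℕ)) : Prop :=
  (∀ c ∈ C, (∀ i, c i < q i) ∧ hammingNorm c = k) ∧
  (∀ x : ι → ℕ, (∀ i, x i < q i) → hammingNorm x = t →
    ∃! c, c ∈ C ∧ hammingDist x c = k - t) ∧
  (∀ c ∈ C, ∀ c' ∈ C, c ≠ c' → 2 * (k - t) + 1 ≤ hammingDist c c')

/-- A one-factor on `Fin n`: a perfect matching of the complete graph on `Fin n`,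
i.e. a collection of 2-element subsets such that every vertex lies in exactly one
of them. -/
def IsOneFactor (n : ℕ) (T : Set (Finset (Fin n))) : Prop :=
  (∀ p ∈ T, p.card = 2) ∧ ∀ v : Fin n, ∃! p, p ∈ T ∧ v ∈ p

/-- An `(n,r)`-pairs-triples design: `r` pairwise disjoint one-factors
`T 1, …, T r` on `Fin n` together with a set `R` of triples of `Fin n` such that
every pair of `Fin n` is covered exactly once: either it belongs to exactly one
one-factor and to no triple of `R`, or it belongs to no one-factor and is contained
in exactly one triple of `R`. -/
def IsPairsTriplesDesign (n r : ℕ) (T : Fin r → Set (Finset (Fin n)))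
    (R : Set (Finset (Fin n))) : Prop :=
  (∀ i, IsOneFactor n (T i)) ∧
  (∀ i j, i ≠ j → Disjoint (T i) (T j)) ∧
  (∀ b ∈ R, b.card = 3) ∧
  (∀ p : Finset (Fin n), p.card = 2 →
    ((∃! i, p ∈ T i) ∧ ¬∃ b ∈ R, p ⊆ b) ∨
      ((∀ i, p ∉ T i) ∧ ∃! b, b ∈ R ∧ p ⊆ b))

theorem stmt15 {n r : ℕ} (hr1 : 1 ≤ r) (hr2 : r < n - 1)
    (h : ∃ (T : Fin r → Set (Finset (Fin n))) (R : Set (Finset (Fin n))),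
        IsPairsTriplesDesign n r T R) :
    ∃ C : Set (Fin n ⊕ Unit → ℕ),
      IsMixedSteiner (Sum.elim (fun _ => 2) (fun _ => r + 1)) 2 3 C := by
  obtain ⟨T, R, hOF, hDisj, hR3, hCover⟩ := h
  -- pairs in one-factors are never inside triples of R
  have hPairNoTriple : ∀ (i : Fin r) (p : Finset (Fin n)), p ∈ T i →
      ¬∃ b ∈ R, p ⊆ b := by
    intro i p hp
    have hp2 : p.card = 2 := (hOF i).1 p hp
    rcases hCover p hp2 with ⟨_, hno⟩ | ⟨hno, _⟩
    · exact hno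
    · exact absurd hp (hno i)
  -- triples intersect in at most one point
  have hTripleInter : ∀ b ∈ R, ∀ b' ∈ R, b ≠ b' → (b ∩ b').card ≤ 1 := by
    intro b hb b' hb' hne
    by_contra hc
    push_neg at hc
    obtain ⟨q, hq, hq2⟩ := Finset.exists_subset_card_eq (s := b ∩ b') (n := 2) (by omega)
    rcases hCover q hq2 with ⟨_, hno⟩ | ⟨_, ⟨b0, _, huniq⟩⟩
    · exact hno ⟨b, hb, hq.trans Finset.inter_subset_left⟩
    · exact hne ((huniq b ⟨hb, hq.trans Finset.inter_subset_left⟩).trans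
        (huniq b' ⟨hb', hq.trans Finset.inter_subset_right⟩).symm)
  refine ⟨{w | (∃ b ∈ R, w = enc b 0) ∨
      ∃ i : Fin r, ∃ p ∈ T i, w = enc p ((i : ℕ) + 1)}, ?_, ?_, ?_⟩
  · -- codewords are valid and have weight 3
    rintro c (⟨b, hb, rfl⟩ | ⟨i, p, hp, rfl⟩)
    · constructor
      · rintro (v | u)
        · simp only [enc, Sum.elim_inl]; split <;> omega
        · simp [enc]
      · rw [norm_enc, hR3 b hb]; simp
    · constructor
      · rintro (v | u)
        · simp only [enc, Sum.elim_inl]; split <;> omega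
        · simp only [enc, Sum.elim_inr]; omega
      · rw [norm_enc, (hOF i).1 p hp]; simp
  · -- every weight-2 word is covered exactly once
    intro x hx hx2
    set s : Finset (Fin n) := Finset.univ.filter (fun v => x (Sum.inl v) = 1) with hs
    set m : ℕ := x (Sum.inr ()) with hmdef
    have hm_lt : m < r + 1 := hx (Sum.inr ())
    have hx_eq : x = enc s m := by
      funext i
      cases i with
      | inl v =>
        have hv := hx (Sum.inl v)
        simp only [Sum.elim_inl] at hv
        by_cases h1 : x (Sum.inl v) = 1 <;> simp [enc, hs, h1] <;> omega
      | inr u => cases u; simp [enc, hmdef]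
    clear_value s m
    rw [hx_eq, norm_enc] at hx2
    by_cases hm : m = 0
    · -- binary pair case
      rw [if_pos hm] at hx2
      have hs2 : s.card = 2 := by omega
      subst hm
      rcases hCover s hs2 with ⟨⟨i, hpi, huniq⟩, hnotriple⟩ | ⟨hnofac, ⟨b, ⟨hbR, hsb⟩, huniqb⟩⟩
      · -- s belongs to a unique one-factor
        refine ⟨enc s ((i : ℕ) + 1), ⟨Or.inr ⟨i, s, hpi, rfl⟩, ?_⟩, ?_⟩
        · rw [hx_eq, dist_enc]; simp
        · rintro c' ⟨(⟨b, hb, rfl⟩ | ⟨j, p, hp, rfl⟩), hd⟩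
          · exfalso
            rw [hx_eq, dist_enc] at hd
            simp only [if_pos rfl, add_zero] at hd
            have e1 := Finset.card_sdiff_add_card_inter s b
            have e2 := Finset.card_sdiff_add_card_inter b s
            have hb3 := hR3 b hb
            have hnsub : ¬ s ⊆ b := fun hsub => hnotriple ⟨b, hb, hsub⟩
            have hle := inter_card_le_one hs2 hnsub
            rw [Finset.inter_comm b s] at e2
            omega
          · rw [hx_eq, dist_enc] at hd
            simp only [Nat.zero_ne_add_one 0, if_neg (by omega : (0:ℕ) ≠ (j:ℕ)+1)] at hd
            have hsp : s = p := eq_of_sdiff_card (by omega)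
            subst hsp
            have : j = i := huniq j hp
            subst this
            rfl
      · -- s belongs to a unique triple
        refine ⟨enc b 0, ⟨Or.inl ⟨b, hbR, rfl⟩, ?_⟩, ?_⟩
        · rw [hx_eq, dist_enc]
          have : s \ b = ∅ := Finset.sdiff_eq_empty_iff_subset.2 hsb
          rw [this, Finset.card_sdiff_of_subset hsb, hR3 b hbR, hs2]
          simp
        · rintro c' ⟨(⟨b', hb', rfl⟩ | ⟨j, p, hp, rfl⟩), hd⟩
          · rw [hx_eq, dist_enc] at hd
            simp only [if_pos rfl, add_zero] at hd
            have e1 := Finset.card_sdiff_add_card_inter s b'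
            have e2 := Finset.card_sdiff_add_card_inter b' s
            have hb3 := hR3 b' hb'
            rw [Finset.inter_comm b' s] at e2
            have hsub : s ⊆ b' := by
              by_contra hnsub
              have hle := inter_card_le_one hs2 hnsub
              omega
            rw [huniqb b' ⟨hb', hsub⟩]
          · exfalso
            rw [hx_eq, dist_enc] at hd
            simp only [if_neg (by omega : (0:ℕ) ≠ (j:ℕ)+1)] at hd
            have hsp : s = p := eq_of_sdiff_card (by omega)
            exact hnofac j (hsp ▸ hp)
    · -- one binary coordinate, nonzero last coordinate
      rw [if_neg hm] at hx2
      have hs1 : s.card = 1 := by omega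
      obtain ⟨v, rfl⟩ := Finset.card_eq_one.1 hs1
      set i : Fin r := ⟨m - 1, by omega⟩ with hidef
      have him : (i : ℕ) + 1 = m := by simp [hidef]; omega
      obtain ⟨p, ⟨hpT, hvp⟩, hup⟩ := (hOF i).2 v
      have hp2 : p.card = 2 := (hOF i).1 p hpT
      have hvsub : {v} ⊆ p := Finset.singleton_subset_iff.2 hvp
      refine ⟨enc p ((i : ℕ) + 1), ⟨Or.inr ⟨i, p, hpT, rfl⟩, ?_⟩, ?_⟩
      · rw [hx_eq, dist_enc, him]
        have : ({v} : Finset (Fin n)) \ p = ∅ := Finset.sdiff_eq_empty_iff_subset.2 hvsub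
        rw [this, Finset.card_sdiff_of_subset hvsub, hp2]
        simp
      · rintro c' ⟨(⟨b, hb, rfl⟩ | ⟨j, p', hp', rfl⟩), hd⟩
        · exfalso
          rw [hx_eq, dist_enc] at hd
          simp only [if_neg hm] at hd
          have hvb : ({v} : Finset (Fin n)) = b := eq_of_sdiff_card (by omega)
          have := hR3 b hb
          rw [← hvb, Finset.card_singleton] at this
          omega
        · rw [hx_eq, dist_enc] at hd
          by_cases hmj : m = (j : ℕ) + 1
          · rw [if_pos hmj, add_zero] at hd
            have hij : j = i := by
              apply Fin.ext
              simp [hidef]; omega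
            subst hij
            have hp'2 : p'.card = 2 := (hOF i).1 p' hp'
            have hvp' : v ∈ p' := by
              by_contra hnv
              have h1 : ({v} : Finset (Fin n)) \ p' = {v} := by
                rw [Finset.sdiff_eq_self_iff_disjoint, Finset.disjoint_singleton_left]
                exact hnv
              have h2 : p' \ {v} = p' := by
                rw [Finset.sdiff_eq_self_iff_disjoint, Finset.disjoint_singleton_right]
                exact hnv
              rw [h1, h2, Finset.card_singleton, hp'2] at hd
              omega
            rw [hup p' ⟨hp', hvp'⟩]
          · exfalso
            rw [if_neg hmj] at hd
            have hvp' : ({v} : Finset (Fin n)) = p' := eq_of_sdiff_card (by omega)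
            have := (hOF j).1 p' hp'
            rw [← hvp', Finset.card_singleton] at this
            omega
  · -- minimum distance
    rintro c (⟨b, hb, rfl⟩ | ⟨i, p, hp, rfl⟩) c' (⟨b', hb', rfl⟩ | ⟨j, p', hp', rfl⟩) hne <;>
      rw [dist_enc]
    · -- triple vs triple
      have hbb : b ≠ b' := by rintro rfl; exact hne rfl
      have hle := hTripleInter b hb b' hb' hbb
      have e1 := Finset.card_sdiff_add_card_inter b b'
      have e2 := Finset.card_sdiff_add_card_inter b' b
      rw [Finset.inter_comm b' b] at e2
      have h3 := hR3 b hb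
      have h3' := hR3 b' hb'
      simp only [if_pos rfl]
      omega
    · -- triple vs pair
      have hnsub : ¬ p' ⊆ b := fun hsub => hPairNoTriple j p' hp' ⟨b, hb, hsub⟩
      have hp'2 : p'.card = 2 := (hOF j).1 p' hp'
      have hle := inter_card_le_one hp'2 hnsub
      have e1 := Finset.card_sdiff_add_card_inter p' b
      have e2 := Finset.card_sdiff_add_card_inter b p'
      rw [Finset.inter_comm b p'] at e2
      have h3 := hR3 b hb
      rw [if_neg (by omega : (0:ℕ) ≠ (j:ℕ)+1)]
      omega
    · -- pair vs triple
      have hnsub : ¬ p ⊆ b' := fun hsub => hPairNoTriple i p hp ⟨b', hb', hsub⟩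
      have hp2 : p.card = 2 := (hOF i).1 p hp
      have hle := inter_card_le_one hp2 hnsub
      have e1 := Finset.card_sdiff_add_card_inter p b'
      have e2 := Finset.card_sdiff_add_card_inter b' p
      rw [Finset.inter_comm b' p] at e2
      have h3 := hR3 b' hb'
      rw [if_neg (by omega : ((i:ℕ)+1) ≠ 0)]
      omega
    · -- pair vs pair
      have hp2 : p.card = 2 := (hOF i).1 p hp
      have hp'2 : p'.card = 2 := (hOF j).1 p' hp'
      by_cases hij : i = j
      · subst hij
        have hpp : p ≠ p' := by rintro rfl; exact hne rfl
        have hdisj : p ∩ p' = ∅ := by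
          by_contra hne'
          obtain ⟨v, hv⟩ := Finset.nonempty_iff_ne_empty.2 hne'
          rw [Finset.mem_inter] at hv
          obtain ⟨p0, _, hup0⟩ := (hOF i).2 v
          exact hpp ((hup0 p ⟨hp, hv.1⟩).trans (hup0 p' ⟨hp', hv.2⟩).symm)
        have e1 := Finset.card_sdiff_add_card_inter p p'
        have e2 := Finset.card_sdiff_add_card_inter p' p
        rw [Finset.inter_comm p' p] at e2
        rw [hdisj, Finset.card_empty] at e1 e2
        omega
      · have hpp : p ≠ p' := by
          rintro rfl
          exact Set.disjoint_left.mp (hDisj i j hij) hp hp'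
        have hnsub : ¬ p ⊆ p' := fun hsub =>
          hpp (Finset.eq_of_subset_of_card_le hsub (by omega))
        have hle := inter_card_le_one hp2 hnsub
        have e1 := Finset.card_sdiff_add_card_inter p p'
        have e2 := Finset.card_sdiff_add_card_inter p' p
        rw [Finset.inter_comm p' p] at e2
        have hij' : ((i:ℕ)+1) ≠ ((j:ℕ)+1) := by
          intro hc
          exact hij (Fin.ext (by omega))
        rw [if_neg hij']
        omega
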